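/- Let R be a commutative ring, M an R-module, and 𝔭 a prime ideal of R. Then 𝔭 is Krull-associated to M (i.e. for every multiplicatively closed subset T of R with T ⊋ R ∖ 𝔭 one has T^M((0)) ⊋ (R ∖ 𝔭)^M((0))) if and only if every element of the maximal ideal 𝔭·R_𝔭 of the localization R_𝔭 is a zero divisor for the localized module M_𝔭. -/

import Mathlib

section Defs

variable (A L : Type*) [CommRing A] [AddCommGroup L] [Module A L]

/-- `a ∈ A` is a zero divisor for the module `L`:
`a • y = 0` for some `y ≠ 0` in `L`. -/
def IsZeroDivisorFor (a : A) : Prop := ∃ y : L, y ≠ 0 ∧ a • y = 0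

/-- `a ∈ A` is nilpotent for the module `L`: for every `y ∈ L` there is `n`
with `a ^ n • y = 0`. -/
def IsNilpotentFor (a : A) : Prop := ∀ y : L, ∃ n : ℕ, a ^ n • y = 0

/-- `L` is `q`-coprimary: `L ≠ 0`, every zero divisor for `L` lies in `q`,
and every element of `q` is nilpotent for `L`. -/
def IsCoprimaryFor (q : Ideal A) : Prop :=
  (∃ y : L, y ≠ 0) ∧ (∀ a : A, IsZeroDivisorFor A L a → a ∈ q) ∧
    ∀ a ∈ q, IsNilpotentFor A L a

/-- A submodule `N` of `L` is `q`-primary in `L` iff `L ⧸ N` is `q`-coprimary. -/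
def IsPrimaryIn (N : Submodule A L) (q : Ideal A) : Prop :=
  IsCoprimaryFor A (L ⧸ N) q

/-- The `S`-component of `N` in `L`: `{x ∈ L | ∃ s ∈ S, s • x ∈ N}`,
for an arbitrary subset `S ⊆ A`. -/
def sComp (S : Set A) (N : Submodule A L) : Set L := {x : L | ∃ s ∈ S, s • x ∈ N}

/-- A prime ideal `p` is Krull-associated to `L` iff for every multiplicatively
closed subset `T ⊋ A ∖ p` one has `T^L((0)) ⊋ (A ∖ p)^L((0))`. -/
def KrullAssociated (p : Ideal A) : Prop :=
  ∀ T : Submonoid A, ((p : Set A)ᶜ ⊂ (T : Set A)) →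
    sComp A L ((p : Set A)ᶜ) ⊥ ⊂ sComp A L (T : Set A) ⊥

end Defs

/-- `𝔭` is Krull-associated to `M` iff every element of the
maximal ideal `𝔭·R_𝔭` of `R_𝔭` is a zero divisor for `M_𝔭`. -/
theorem statement8 {R M : Type*} [CommRing R] [AddCommGroup M] [Module R M]
    (𝔭 : Ideal R) [𝔭.IsPrime] :
    KrullAssociated R M 𝔭 ↔
      ∀ a ∈ Ideal.map (algebraMap R (Localization.AtPrime 𝔭)) 𝔭,
        IsZeroDivisorFor (Localization.AtPrime 𝔭) (LocalizedModule 𝔭.primeCompl M) a := by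
  constructor
  · -- Krull-associated → every element of 𝔭·R_𝔭 is a zero divisor
    intro hK a ha
    rw [IsLocalization.mem_map_algebraMap_iff 𝔭.primeCompl] at ha
    obtain ⟨⟨⟨t, ht⟩, s⟩, hts⟩ := ha
    have ha' : a = IsLocalization.mk' (Localization.AtPrime 𝔭) t s :=
      (IsLocalization.eq_mk'_iff_mul_eq).mpr hts
    classical
    set T : Submonoid R :=
      { carrier := {r | ∃ (n : ℕ) (u : R), u ∉ 𝔭 ∧ r = u * t ^ n}
        mul_mem' := by
          rintro x y ⟨n, u, hu, rfl⟩ ⟨m, v, hv, rfl⟩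
          exact ⟨n + m, u * v,
            fun h => ((‹𝔭.IsPrime›.mem_or_mem h).elim hu hv), by ring⟩
        one_mem' := ⟨0, 1, 𝔭.primeCompl.one_mem, by ring⟩ } with hTdef
    have hsub : ((𝔭 : Set R)ᶜ) ⊆ (T : Set R) := by
      intro u hu
      exact ⟨0, u, hu, by ring⟩
    have htT : t ∈ T := ⟨1, 1, 𝔭.primeCompl.one_mem, by ring⟩
    have hss : ((𝔭 : Set R)ᶜ) ⊂ (T : Set R) :=
      (Set.ssubset_iff_of_subset hsub).mpr ⟨t, htT, by simpa using ht⟩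
    obtain ⟨x, hxT, hxP⟩ := Set.exists_of_ssubset (hK T hss)
    obtain ⟨r, ⟨n, u, hu, rfl⟩, hr0⟩ := hxT
    rw [Submodule.mem_bot] at hr0
    have hP : ∃ n : ℕ, ∃ u : R, u ∉ 𝔭 ∧ (u * t ^ n) • x = 0 := ⟨n, u, hu, hr0⟩
    set n₀ := Nat.find hP with hn₀
    obtain ⟨v, hv, hvx⟩ := Nat.find_spec hP
    have hn₀pos : n₀ ≠ 0 := by
      intro h0
      apply hxP
      refine ⟨v, by simpa using hv, ?_⟩
      rw [Submodule.mem_bot]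
      have := hvx
      rw [← hn₀, h0] at this
      simpa using this
    obtain ⟨k, hk⟩ : ∃ k, n₀ = k + 1 := ⟨n₀ - 1, (Nat.succ_pred_eq_of_pos
      (Nat.pos_of_ne_zero hn₀pos)).symm⟩
    refine ⟨LocalizedModule.mk (t ^ k • x) 1, ?_, ?_⟩
    · intro hzero
      rw [← LocalizedModule.zero_mk (1 : 𝔭.primeCompl), LocalizedModule.mk_eq] at hzero
      obtain ⟨w, hw⟩ := hzero
      simp only [one_smul, smul_zero, Submonoid.smul_def, smul_smul] at hw
      have : ∃ u : R, u ∉ 𝔭 ∧ (u * t ^ k) • x = 0 := ⟨w, w.2, hw⟩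
      have hlt : k < n₀ := by omega
      exact Nat.find_min hP hlt this
    · rw [ha', ← Localization.mk_eq_mk'_apply, LocalizedModule.mk_smul_mk]
      rw [← LocalizedModule.zero_mk (1 : 𝔭.primeCompl), LocalizedModule.mk_eq]
      refine ⟨⟨v, hv⟩, ?_⟩
      simp only [one_smul, smul_zero, Submonoid.smul_def, smul_smul]
      have : v * (t * t ^ k) = v * t ^ (k + 1) := by ring
      rw [this, ← hk]
      exact hvx
  · -- every element of 𝔭·R_𝔭 is a zero divisor → Krull-associated
    intro h T hTss
    have hsub : sComp R M ((𝔭 : Set R)ᶜ) ⊥ ⊆ sComp R M (T : Set R) ⊥ := by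
      rintro x ⟨s', hs', hx⟩
      exact ⟨s', hTss.subset hs', hx⟩
    obtain ⟨t, htT, ht⟩ := Set.exists_of_ssubset hTss
    have ht𝔭 : t ∈ 𝔭 := by simpa using ht
    obtain ⟨y, hy0, hay⟩ := h _ (Ideal.mem_map_of_mem _ ht𝔭)
    induction y using LocalizedModule.induction_on with
    | _ m s =>
      refine (Set.ssubset_iff_of_subset hsub).mpr ⟨m, ?_, ?_⟩
      · -- m ∈ sComp T ⊥
        rw [← Localization.mk_one_eq_algebraMap, LocalizedModule.mk_smul_mk] at hay
        rw [← LocalizedModule.zero_mk (1 : 𝔭.primeCompl), LocalizedModule.mk_eq] at hay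
        obtain ⟨w, hw⟩ := hay
        simp only [one_smul, smul_zero, Submonoid.smul_def, smul_smul] at hw
        refine ⟨(w : R) * t, T.mul_mem (hTss.subset ?_) htT, ?_⟩
        · exact w.2
        · rw [Submodule.mem_bot]
          exact hw
      · -- m ∉ sComp 𝔭ᶜ ⊥
        rintro ⟨w, hw, hwm⟩
        rw [Submodule.mem_bot] at hwm
        apply hy0
        rw [← LocalizedModule.zero_mk (1 : 𝔭.primeCompl), LocalizedModule.mk_eq]
        refine ⟨⟨w, by simpa using hw⟩, ?_⟩
        simp only [one_smul, smul_zero, Submonoid.smul_def, smul_smul]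
        exact hwm
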